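/- arXiv:1609.01222 — 2 statements merged into one kernel-verified Lean document; each statement's English description precedes it below -/
import Mathlib

section
/- If f ∈ Homeo₀(T²) has the shadowing property, then its rotation set is upper-stable in Homeo₀(T²): there exists δ₀ > 0 such that for any lift f̃ of f, every g ∈ Homeo₀(T²) and every lift g̃ of g with sup_{x∈ℝ²} ‖f̃(x) − g̃(x)‖ ≤ δ₀ satisfy ρ(g̃) ⊆ ρ(f̃). -/
noncomputable section

open Metric Set Filter Topology MeasureTheory Pointwise

/-- The plane `ℝ²` with the Euclidean metric. -/
abbrev R2 : Type := EuclideanSpace ℝ (Fin 2)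

/-- The integer lattice `ℤ² ⊂ ℝ²`. -/
def intLattice : AddSubgroup R2 where
  carrier := {v : R2 | ∀ i, ∃ n : ℤ, v i = (n : ℝ)}
  add_mem' := by
    intro a b ha hb i
    obtain ⟨m, hm⟩ := ha i
    obtain ⟨n, hn⟩ := hb i
    exact ⟨m + n, by push_cast; rw [← hm, ← hn]; rfl⟩
  zero_mem' := fun i => ⟨0, by simp⟩
  neg_mem' := by
    intro a ha i
    obtain ⟨m, hm⟩ := ha i
    exact ⟨-m, by push_cast; rw [← hm]; rfl⟩

/-- The torus `T² = ℝ²/ℤ²`, with the quotient (Euclidean) metric. -/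
abbrev T2 : Type := R2 ⧸ intLattice

/-- The covering projection `π : ℝ² → T²`. -/
def pr : R2 → T2 := QuotientAddGroup.mk

instance : MeasurableSpace T2 := borel T2
instance : BorelSpace T2 := ⟨rfl⟩

/-- A fundamental domain `[0,1)²` for the lattice action. -/
def fundDomain : Set R2 := {x : R2 | ∀ i, x i ∈ Set.Ico (0 : ℝ) 1}

/-- Lebesgue (Haar) probability measure on the torus `T²`. -/
def lebT2 : Measure T2 := Measure.map pr (volume.restrict fundDomain)

/-- `F : ℝ² → ℝ²` is a lift of `f : T² → T²` if `π ∘ F = f ∘ π` and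
`F (x + w) = F x + w` for every lattice vector `w ∈ ℤ²`. -/
structure IsLift (f : T2 ≃ₜ T2) (F : R2 ≃ₜ R2) : Prop where
  proj : ∀ x : R2, pr (F x) = f (pr x)
  equivariant : ∀ x : R2, ∀ w ∈ intLattice, F (x + w) = F x + w

/-- `Homeo₀(T²)`: homeomorphisms of the torus isotopic to the identity,
characterized as those admitting a lift commuting with integer translations. -/
def Homeo0 : Set (T2 ≃ₜ T2) := {f | ∃ F : R2 ≃ₜ R2, IsLift f F}

/-- `Homeo_{0,λ}(T²)`: elements of `Homeo₀(T²)` preserving Lebesgue measure. -/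
def Homeo0Leb : Set (T2 ≃ₜ T2) :=
  {f | f ∈ Homeo0 ∧ MeasurePreserving f lebT2 lebT2}

/-- The uniform `C⁰` distance `d_{C⁰}(f,g) = sup_x d(f(x), g(x))` on torus maps. -/
def dC0 (f g : T2 ≃ₜ T2) : ℝ := ⨆ x : T2, dist (f x) (g x)

/-- The uniform distance `sup_{x ∈ ℝ²} ‖F(x) − G(x)‖` between maps of the plane. -/
def supDist (F G : R2 → R2) : ℝ := ⨆ x : R2, dist (F x) (G x)

/-- The rotation set `ρ(F̃)` of a lift: all limits `(F̃^{n_k}(z_k) − z_k)/n_k`. -/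
def rotSet (F : R2 ≃ₜ R2) : Set R2 :=
  {v | ∃ (z : ℕ → R2) (n : ℕ → ℕ), Tendsto n atTop atTop ∧
    Tendsto (fun k => (n k : ℝ)⁻¹ • ((⇑F)^[n k] (z k) - z k)) atTop (𝓝 v)}

/-- The rotation set of `f`, with fixed lift `F`, is `δ`-upper-stable in `H`. -/
def UpperStable (H : Set (T2 ≃ₜ T2)) (F : R2 ≃ₜ R2) (δ : ℝ) : Prop :=
  ∀ g ∈ H, ∀ G : R2 ≃ₜ R2, IsLift g G → supDist (⇑F) (⇑G) < δ →
    rotSet G ⊆ rotSet F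

/-- The rotation set of `f`, with fixed lift `F`, is `δ`-stable in `H`. -/
def StableRS (H : Set (T2 ≃ₜ T2)) (F : R2 ≃ₜ R2) (δ : ℝ) : Prop :=
  ∀ g ∈ H, ∀ G : R2 ≃ₜ R2, IsLift g G → supDist (⇑F) (⇑G) < δ →
    rotSet G = rotSet F

/-- `f` has a stable rotation set in `H`. -/
def HasStableRotSet (H : Set (T2 ≃ₜ T2)) (f : T2 ≃ₜ T2) : Prop :=
  ∃ F : R2 ≃ₜ R2, IsLift f F ∧ ∃ δ > 0, StableRS H F δ

/-- `S` is open in `H` for the uniform `C⁰` topology. -/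
def OpenIn (H S : Set (T2 ≃ₜ T2)) : Prop :=
  ∀ f ∈ S ∩ H, ∃ δ > 0, ∀ g ∈ H, dC0 f g < δ → g ∈ S

/-- `S` is dense in `H` for the uniform `C⁰` topology. -/
def DenseIn (H S : Set (T2 ≃ₜ T2)) : Prop :=
  ∀ f ∈ H, ∀ ε > 0, ∃ g ∈ S ∩ H, dC0 f g < ε

/-- `(x_i)_{0 ≤ i ≤ n}` is a finite `ε`-pseudo-orbit of `F`. -/
def IsPseudoOrbitUpTo (F : R2 → R2) (ε : ℝ) (x : ℕ → R2) (n : ℕ) : Prop :=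
  ∀ i < n, dist (F (x i)) (x (i + 1)) < ε

/-- `(x_i)_{i ∈ ℕ}` is an infinite `ε`-pseudo-orbit of `F`. -/
def IsPseudoOrbit (F : R2 → R2) (ε : ℝ) (x : ℕ → R2) : Prop :=
  ∀ i : ℕ, dist (F (x i)) (x (i + 1)) < ε

/-- The `ε`-pseudo-rotation set `ρ_ε(F̃)`. -/
def pseudoRotSet (F : R2 → R2) (ε : ℝ) : Set R2 :=
  {v | ∃ (n : ℕ → ℕ) (x : ℕ → ℕ → R2), Tendsto n atTop atTop ∧
    (∀ k, IsPseudoOrbitUpTo F ε (x k) (n k)) ∧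
    Tendsto (fun k => (n k : ℝ)⁻¹ • (x k (n k) - x k 0)) atTop (𝓝 v)}

/-- The oscillation `osc(f) = sup_{x,y} ‖(F(x) − x) − (F(y) − y)‖` of a lift. -/
def osc (F : R2 → R2) : ℝ := ⨆ p : R2 × R2, ‖(F p.1 - p.1) - (F p.2 - p.2)‖

/-- `f` has the shadowing property. -/
def Shadowing (f : T2 ≃ₜ T2) : Prop :=
  ∀ ε > 0, ∃ δ > 0, ∀ x : ℕ → T2, (∀ i, dist (f (x i)) (x (i + 1)) < δ) →
    ∃ z : T2, ∀ i, dist ((⇑f)^[i] z) (x i) < ε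

/-- `v ∈ ℚ² ⊂ ℝ²`. -/
def IsRationalPoint (v : R2) : Prop := ∀ i, ∃ q : ℚ, v i = (q : ℝ)


-- ### auxiliary lemmas

lemma pr_sub (a b : R2) : pr a - pr b = pr (a - b) := rfl

lemma dist_pr_le (a b : R2) : dist (pr a) (pr b) ≤ dist a b := by
  rw [dist_eq_norm, dist_eq_norm, pr_sub]
  exact QuotientAddGroup.norm_mk_le_norm

lemma pr_lip : LipschitzWith 1 pr :=
  LipschitzWith.of_dist_le_mul fun a b => by simpa using dist_pr_le a b

lemma dist_pr_lt {a b : R2} {r : ℝ} (h : dist (pr a) (pr b) < r) :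
    ∃ m ∈ intLattice, ‖a - b + m‖ < r := by
  rw [dist_eq_norm, pr_sub] at h
  obtain ⟨c, hc, hcn⟩ := QuotientAddGroup.norm_lt_iff.1 h
  have hmem : -c + (a - b) ∈ intLattice := (QuotientAddGroup.eq (s := intLattice)).1 hc
  refine ⟨-(-c + (a - b)), intLattice.neg_mem hmem, ?_⟩
  have : a - b + -(-c + (a - b)) = c := by abel
  rwa [this]

lemma coord_abs_le_norm (v : R2) (i : Fin 2) : |v i| ≤ ‖v‖ := by
  rw [EuclideanSpace.norm_eq, ← Real.sqrt_sq_eq_abs]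
  apply Real.sqrt_le_sqrt
  have := Finset.single_le_sum (f := fun j => ‖v j‖ ^ 2)
    (fun j _ => sq_nonneg _) (Finset.mem_univ i)
  simpa [Real.norm_eq_abs, sq_abs] using this

lemma latt_eq_zero {w : R2} (hw : w ∈ intLattice) (h : ‖w‖ < 1) : w = 0 := by
  have hco : ∀ i, w i = 0 := by
    intro i
    obtain ⟨n, hn⟩ := hw i
    have h1 : |w i| ≤ ‖w‖ := coord_abs_le_norm w i
    have h2 : |(n : ℝ)| < 1 := by rw [← hn]; linarith
    have h3 : |n| < 1 := by exact_mod_cast h2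
    have h4 : n = 0 := Int.abs_lt_one_iff.1 h3
    simp [hn, h4]
  ext i
  exact hco i

def flr (x : R2) : R2 := WithLp.toLp 2 (fun i => ((⌊x i⌋ : ℤ) : ℝ))

lemma flr_mem (x : R2) : flr x ∈ intLattice := fun i => ⟨⌊x i⌋, rfl⟩

lemma sub_flr_apply (x : R2) (i : Fin 2) : (x - flr x) i = Int.fract (x i) := by
  simp [flr, Int.self_sub_floor]

def Kbox : Set R2 := {x | ∀ i, x i ∈ Set.Icc (0:ℝ) 1}

lemma Kbox_compact : IsCompact Kbox := by
  have h1 : IsCompact (Set.univ.pi fun _ : Fin 2 => Set.Icc (0:ℝ) 1) :=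
    isCompact_univ_pi fun _ => isCompact_Icc
  have hK : Kbox = (EuclideanSpace.equiv (Fin 2) ℝ).toHomeomorph ⁻¹'
      (Set.univ.pi fun _ : Fin 2 => Set.Icc (0:ℝ) 1) := by
    ext x
    have he : ∀ (i : Fin 2), (EuclideanSpace.equiv (Fin 2) ℝ).toHomeomorph x i = x i :=
      fun i => by simp
    simp only [Set.mem_preimage, Set.mem_pi, Set.mem_univ, forall_true_left, he]
    exact Iff.rfl
  rw [hK]
  exact (EuclideanSpace.equiv (Fin 2) ℝ).toHomeomorph.isCompact_preimage.2 h1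

lemma pr_image_Kbox : pr '' Kbox = Set.univ := by
  ext q
  simp only [Set.mem_univ, iff_true, Set.mem_image]
  obtain ⟨a, rfl⟩ := QuotientAddGroup.mk_surjective q
  refine ⟨a - flr a, fun i => ?_, ?_⟩
  · rw [sub_flr_apply]
    exact ⟨Int.fract_nonneg _, (Int.fract_lt_one _).le⟩
  · show pr (a - flr a) = pr a
    have h0 : pr (flr a) = 0 := (QuotientAddGroup.eq_zero_iff _).2 (flr_mem a)
    rw [show pr (a - flr a) = pr a - pr (flr a) from rfl, h0, sub_zero]

instance : CompactSpace T2 := by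
  refine ⟨?_⟩
  rw [← pr_image_Kbox]
  exact Kbox_compact.image pr_lip.continuous

lemma disp_factor {h : T2 ≃ₜ T2} {H : R2 ≃ₜ R2} (hl : IsLift h H) :
    ∃ ψ : T2 → R2, Continuous ψ ∧ ∀ x, H x - x = ψ (pr x) := by
  have hresp : ∀ a b : R2, (QuotientAddGroup.leftRel intLattice) a b → H a - a = H b - b := by
    intro a b hab
    have hmem : -a + b ∈ intLattice := (QuotientAddGroup.leftRel_apply).1 hab
    have : H b = H a + (-a + b) := by
      rw [← hl.equivariant a _ hmem]; congr 1; abel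
    rw [this]; abel
  refine ⟨fun q : T2 => Quotient.liftOn' (s₁ := QuotientAddGroup.leftRel intLattice) q
    (fun x => H x - x) hresp, ?_, fun x => rfl⟩
  apply (QuotientAddGroup.isQuotientMap_mk intLattice).continuous_iff.2
  exact H.continuous.sub continuous_id

lemma disp_bounded {h : T2 ≃ₜ T2} {H : R2 ≃ₜ R2} (hl : IsLift h H) :
    ∃ C : ℝ, ∀ x : R2, ‖H x - x‖ ≤ C := by
  obtain ⟨ψ, hψc, hψ⟩ := disp_factor hl
  obtain ⟨q0, -, hq0⟩ := isCompact_univ.exists_isMaxOn (Set.univ_nonempty)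
    (continuous_norm.comp hψc).continuousOn
  exact ⟨‖ψ q0‖, fun x => by rw [hψ x]; exact hq0 (Set.mem_univ (pr x))⟩

lemma lift_UC {h : T2 ≃ₜ T2} {H : R2 ≃ₜ R2} (hl : IsLift h H) :
    ∀ ε > 0, ∃ η > 0, ∀ a b : R2, dist a b < η → dist (H a) (H b) < ε := by
  obtain ⟨ψ, hψc, hψ⟩ := disp_factor hl
  have huc : UniformContinuous ψ := CompactSpace.uniformContinuous_of_continuous hψc
  rw [Metric.uniformContinuous_iff] at huc
  intro ε hε
  obtain ⟨η, hη, hη'⟩ := huc (ε/2) (by linarith)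
  refine ⟨min η (ε/2), by positivity, fun a b hab => ?_⟩
  have h1 : dist (ψ (pr a)) (ψ (pr b)) < ε/2 :=
    hη' ((dist_pr_le a b).trans_lt (hab.trans_le (min_le_left _ _)))
  have h2 : dist (H a) (H b) ≤ dist (H a - a) (H b - b) + dist a b := by
    rw [dist_eq_norm, dist_eq_norm, dist_eq_norm]
    calc ‖H a - H b‖ = ‖((H a - a) - (H b - b)) + (a - b)‖ := by congr 1; abel
      _ ≤ ‖(H a - a) - (H b - b)‖ + ‖a - b‖ := norm_add_le _ _
  have h3 : dist a b < ε/2 := hab.trans_le (min_le_right _ _)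
  rw [hψ a, hψ b] at h2
  linarith

lemma lift_unique {h : T2 ≃ₜ T2} {H H' : R2 ≃ₜ R2} (hl : IsLift h H) (hl' : IsLift h H') :
    ∃ c ∈ intLattice, ∀ x : R2, H x = H' x + c := by
  set D : R2 → R2 := fun x => H x - H' x with hD
  have hmem : ∀ x, D x ∈ intLattice := by
    intro x
    have hpq : pr (H x) = pr (H' x) := by rw [hl.proj, hl'.proj]
    have := (QuotientAddGroup.eq (s := intLattice)).1 hpq.symm
    have h2 : -(H' x) + H x = D x := by simp [hD]; abel
    rwa [h2] at this
  have hDc : Continuous D := H.continuous.sub H'.continuous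
  have hloc : ∀ x : R2, ∀ᶠ y in 𝓝 x, D y = D x := by
    intro x
    have : ∀ᶠ y in 𝓝 x, dist (D y) (D x) < 1 :=
      (Metric.tendsto_nhds.1 (hDc.tendsto x)) 1 one_pos
    filter_upwards [this] with y hy
    have h0 : D y - D x = 0 :=
      latt_eq_zero (intLattice.sub_mem (hmem y) (hmem x)) (by rwa [← dist_eq_norm])
    exact sub_eq_zero.1 h0
  have hclopen : IsClopen {y : R2 | D y = D 0} := by
    constructor
    · rw [← isOpen_compl_iff]
      apply isOpen_iff_eventually.2
      intro x hx
      filter_upwards [hloc x] with y hy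
      simp only [Set.mem_compl_iff, Set.mem_setOf_eq] at hx ⊢
      rw [hy]; exact hx
    · apply isOpen_iff_eventually.2
      intro x hx
      filter_upwards [hloc x] with y hy
      rw [hy]; exact hx
  have huniv : {y : R2 | D y = D 0} = Set.univ := by
    have := (isPreconnected_univ (α := R2)).subset_isClopen hclopen
      ⟨0, trivial, rfl⟩
    exact Set.eq_univ_of_univ_subset this
  refine ⟨D 0, hmem 0, fun x => ?_⟩
  have hx : D x = D 0 := by
    have : x ∈ {y : R2 | D y = D 0} := huniv ▸ trivial
    exact this
  have : H x - H' x = D 0 := hx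
  rw [← this]; abel

lemma iterate_lift {f : T2 ≃ₜ T2} {F : R2 ≃ₜ R2} (hF : IsLift f F) (x : R2) :
    ∀ i : ℕ, pr ((⇑F)^[i] x) = (⇑f)^[i] (pr x) := by
  intro i
  induction i with
  | zero => simp
  | succ i ih =>
    rw [Function.iterate_succ_apply', Function.iterate_succ_apply', hF.proj, ih]

lemma supDist_pt {h h' : T2 ≃ₜ T2} {H H' : R2 ≃ₜ R2} (hl : IsLift h H) (hl' : IsLift h' H')
    (x : R2) : dist (H x) (H' x) ≤ supDist (⇑H) (⇑H') := by
  obtain ⟨C, hC⟩ := disp_bounded hl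
  obtain ⟨C', hC'⟩ := disp_bounded hl'
  apply le_ciSup (f := fun x => dist (H x) (H' x))
  refine ⟨C + C', Set.forall_mem_range.2 fun y => ?_⟩
  calc dist (H y) (H' y) = ‖(H y - y) - (H' y - y)‖ := by rw [dist_eq_norm]; congr 1; abel
    _ ≤ ‖H y - y‖ + ‖H' y - y‖ := norm_sub_le _ _
    _ ≤ C + C' := add_le_add (hC y) (hC' y)

/-- If `f ∈ Homeo₀(T²)` has the shadowing property, then its rotation
set is upper-stable in `Homeo₀(T²)`: there is `δ₀ > 0` such that for any lift `F` of
`f`, every `g ∈ Homeo₀(T²)` and lift `G` of `g` with `sup_x ‖F(x) − G(x)‖ ≤ δ₀`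
satisfy `ρ(G) ⊆ ρ(F)`. -/
theorem upper_stable_of_shadowing (f : T2 ≃ₜ T2) (hf : f ∈ Homeo0)
    (hsh : Shadowing f) :
    ∃ δ₀ > 0, ∀ F : R2 ≃ₜ R2, IsLift f F → ∀ g ∈ Homeo0, ∀ G : R2 ≃ₜ R2,
      IsLift g G → supDist (⇑F) (⇑G) ≤ δ₀ → rotSet G ⊆ rotSet F := by
  obtain ⟨F₀, hF₀⟩ := hf
  obtain ⟨η, hη, hmod⟩ := lift_UC hF₀ (1/16) (by norm_num)
  set ε := min (η/2) (1/32) with hεdef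
  have hεpos : 0 < ε := lt_min (by linarith) (by norm_num)
  have hε32 : ε ≤ 1/32 := min_le_right _ _
  have hεη : 2*ε ≤ η := by
    have := min_le_left (η/2) (1/32)
    have : ε ≤ η/2 := this
    linarith
  obtain ⟨δ, hδ, hshad⟩ := hsh ε hεpos
  refine ⟨min δ (1/8) / 2, by positivity, ?_⟩
  intro F hF g hg G hG hsup
  set δ₀ := min δ (1/8) / 2 with hδ₀def
  have hδ₀δ : δ₀ < δ := by
    have h1 : min δ (1/8) ≤ δ := min_le_left _ _
    rw [hδ₀def]; linarith
  have hδ₀8 : δ₀ ≤ 1/16 := by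
    have h1 : min δ (1/8) ≤ 1/8 := min_le_right _ _
    rw [hδ₀def]; linarith
  obtain ⟨c, hcmem, hc⟩ := lift_unique hF hF₀
  have hmodF : ∀ a b : R2, dist a b < η → dist (F a) (F b) < 1/16 := by
    intro a b hab
    rw [hc a, hc b, dist_add_right]
    exact hmod a b hab
  intro v hv
  obtain ⟨z, n, hn, hlim⟩ := hv
  have key : ∀ k : ℕ, ∃ y : R2,
      ‖((⇑F)^[n k] y - y) - ((⇑G)^[n k] (z k) - z k)‖ ≤ 4 * ε := by
    intro k
    have hpo : ∀ i, dist (f (pr ((⇑G)^[i] (z k)))) (pr ((⇑G)^[i+1] (z k))) < δ := by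
      intro i
      rw [← hF.proj, Function.iterate_succ_apply']
      calc dist (pr (F ((⇑G)^[i] (z k)))) (pr (G ((⇑G)^[i] (z k))))
          ≤ dist (F ((⇑G)^[i] (z k))) (G ((⇑G)^[i] (z k))) := dist_pr_le _ _
        _ ≤ supDist (⇑F) (⇑G) := supDist_pt hF hG _
        _ ≤ δ₀ := hsup
        _ < δ := hδ₀δ
    obtain ⟨zT, hzT⟩ := hshad (fun i => pr ((⇑G)^[i] (z k))) hpo
    obtain ⟨w₀, hw₀⟩ := QuotientAddGroup.mk_surjective zT
    have hw₀' : pr w₀ = zT := hw₀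
    have hclose : ∀ i : ℕ, ∃ m ∈ intLattice,
        ‖(⇑F)^[i] w₀ - (⇑G)^[i] (z k) + m‖ < 2*ε := by
      intro i
      apply dist_pr_lt
      have h1 : pr ((⇑F)^[i] w₀) = (⇑f)^[i] zT := by
        rw [iterate_lift hF, hw₀']
      calc dist (pr ((⇑F)^[i] w₀)) (pr ((⇑G)^[i] (z k)))
          = dist ((⇑f)^[i] zT) (pr ((⇑G)^[i] (z k))) := by rw [h1]
        _ < ε := hzT i
        _ < 2*ε := by linarith
    choose m hm hmb using hclose
    have hstep : ∀ i, m (i+1) = m i := by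
      intro i
      set a := (⇑G)^[i] (z k) with hadef
      set e := (⇑F)^[i] w₀ - a + m i with hedef
      have he : ‖e‖ < 2*ε := hmb i
      have heq : (⇑F)^[i+1] w₀ + m i = F (a + e) := by
        rw [Function.iterate_succ_apply', ← hF.equivariant _ _ (hm i)]
        congr 1
        rw [hedef]; abel
      have h3 : dist (F (a + e)) (F a) < 1/16 := by
        apply hmodF
        have hae : a + e - a = e := by abel
        rw [dist_eq_norm, hae]
        exact lt_of_lt_of_le he hεη
      have h4 : dist (F a) (G a) ≤ δ₀ := (supDist_pt hF hG a).trans hsup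
      have hGa : (⇑G)^[i+1] (z k) = G a := Function.iterate_succ_apply' (⇑G) i (z k)
      have e1 : ‖(⇑F)^[i+1] w₀ - (⇑G)^[i+1] (z k) + m i‖ < 1/8 := by
        have hrw : (⇑F)^[i+1] w₀ - (⇑G)^[i+1] (z k) + m i = F (a + e) - G a := by
          rw [hGa, ← heq]; abel
        rw [hrw]
        have htri : ‖F (a+e) - G a‖ ≤ dist (F (a+e)) (F a) + dist (F a) (G a) := by
          rw [← dist_eq_norm]; exact dist_triangle _ _ _
        linarith
      have e2 : ‖(⇑F)^[i+1] w₀ - (⇑G)^[i+1] (z k) + m (i+1)‖ < 2*ε := hmb (i+1)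
      have hdm : ‖m (i+1) - m i‖ < 1 := by
        have hsplit : m (i+1) - m i =
            ((⇑F)^[i+1] w₀ - (⇑G)^[i+1] (z k) + m (i+1)) -
            ((⇑F)^[i+1] w₀ - (⇑G)^[i+1] (z k) + m i) := by abel
        rw [hsplit]
        calc ‖((⇑F)^[i+1] w₀ - (⇑G)^[i+1] (z k) + m (i+1)) -
              ((⇑F)^[i+1] w₀ - (⇑G)^[i+1] (z k) + m i)‖
            ≤ ‖(⇑F)^[i+1] w₀ - (⇑G)^[i+1] (z k) + m (i+1)‖ +
              ‖(⇑F)^[i+1] w₀ - (⇑G)^[i+1] (z k) + m i‖ := norm_sub_le _ _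
          _ < 2*ε + 1/8 := add_lt_add e2 e1
          _ ≤ 1 := by linarith
      have h0 := latt_eq_zero (intLattice.sub_mem (hm (i+1)) (hm i)) hdm
      exact sub_eq_zero.1 h0
    have hconst : ∀ i, m i = m 0 := by
      intro i
      induction i with
      | zero => rfl
      | succ i ih => rw [hstep i, ih]
    refine ⟨w₀, ?_⟩
    have b0 : ‖w₀ - z k + m 0‖ < 2*ε := by simpa using hmb 0
    have bn : ‖(⇑F)^[n k] w₀ - (⇑G)^[n k] (z k) + m 0‖ < 2*ε := by
      have := hmb (n k); rwa [hconst (n k)] at this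
    have hsplit : ((⇑F)^[n k] w₀ - w₀) - ((⇑G)^[n k] (z k) - z k) =
        ((⇑F)^[n k] w₀ - (⇑G)^[n k] (z k) + m 0) - (w₀ - z k + m 0) := by abel
    rw [hsplit]
    calc ‖((⇑F)^[n k] w₀ - (⇑G)^[n k] (z k) + m 0) - (w₀ - z k + m 0)‖
        ≤ ‖(⇑F)^[n k] w₀ - (⇑G)^[n k] (z k) + m 0‖ + ‖w₀ - z k + m 0‖ := norm_sub_le _ _
      _ ≤ 4*ε := by linarith
  choose y hy using key
  refine ⟨y, n, hn, ?_⟩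
  have hinv : Tendsto (fun k => ((n k : ℝ))⁻¹) atTop (𝓝 (0:ℝ)) :=
    tendsto_inv_atTop_zero.comp (tendsto_natCast_atTop_atTop.comp hn)
  have hd0 : Tendsto (fun k => dist ((n k : ℝ)⁻¹ • ((⇑G)^[n k] (z k) - z k))
      ((n k : ℝ)⁻¹ • ((⇑F)^[n k] (y k) - y k))) atTop (𝓝 0) := by
    apply squeeze_zero (fun k => dist_nonneg) (g := fun k => (n k:ℝ)⁻¹ * (4*ε))
    · intro k
      rw [dist_eq_norm, ← smul_sub, norm_smul]
      have h1 : ‖((n k:ℝ))⁻¹‖ = (n k:ℝ)⁻¹ := by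
        rw [Real.norm_eq_abs, abs_of_nonneg]; positivity
      rw [h1]
      apply mul_le_mul_of_nonneg_left ?_ (by positivity)
      rw [norm_sub_rev]
      exact hy k
    · simpa using hinv.mul_const (4*ε)
  exact hlim.congr_dist hd0
end
end

section
/- Let f ∈ Homeo₀(T²) have an ε-upper-stable rotation set (in Homeo₀(T²)) with 0 < ε < 1, let f̃ be a lift of f, and let (x̃_i)_{i∈ℕ} be an (ε/2)-pseudo-orbit of f̃ in ℝ². If i < j are indices and there exists w ∈ ℤ² with ‖x̃_j − x̃_i − w‖ < ε/2, then w/(j−i) ∈ ρ(f̃); in particular x̃_j − x̃_i = (j−i)v + η for some v ∈ ρ(f̃) and some η ∈ ℝ² with ‖η‖ < ε/2. -/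
noncomputable section

open Metric Set Filter Topology MeasureTheory Pointwise

section Prelim

/-- The lattice as a set. -/
def latSet : Set R2 := (intLattice : Set R2)

/-- Equivariance under integer translations. -/
def Equivariant (G : R2 → R2) : Prop := ∀ x : R2, ∀ w ∈ intLattice, G (x + w) = G x + w

lemma lat_closed : IsClosed latSet := by
  have : latSet = ⋂ i : Fin 2, (fun v : R2 => v i) ⁻¹' (Set.range ((↑) : ℤ → ℝ)) := by
    ext v
    simp only [Set.mem_iInter, Set.mem_preimage, Set.mem_range, latSet]
    exact ⟨fun h i => (h i).imp (fun n hn => hn.symm), fun h i => (h i).imp (fun n hn => hn.symm)⟩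
  rw [this]
  exact isClosed_iInter fun i =>
    (Int.isClosedEmbedding_coe_real.isClosed_range).preimage (show Continuous fun v : R2 => v i by fun_prop)

lemma lat_countable : latSet.Countable := by
  have h : latSet ⊆ Set.range (fun n : Fin 2 → ℤ => (WithLp.toLp 2 (fun i => (n i : ℝ)) : EuclideanSpace ℝ (Fin 2))) := by
    intro v hv
    refine ⟨fun i => (hv i).choose, ?_⟩
    ext i
    exact ((hv i).choose_spec).symm
  exact (Set.countable_range _).mono h

lemma lat_nonempty : latSet.Nonempty := ⟨0, intLattice.zero_mem⟩

lemma infDist_lat_add (x : R2) {v : R2} (hv : v ∈ intLattice) :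
    infDist (x + v) latSet = infDist x latSet := by
  have hiso : Isometry (fun y : R2 => y + v) := Isometry.of_dist_eq (by
    intro a b; rw [dist_eq_norm, dist_eq_norm]; congr 1; abel)
  have himg : (fun y : R2 => y + v) '' latSet = latSet := by
    ext z
    constructor
    · rintro ⟨u, hu, rfl⟩; exact intLattice.add_mem hu hv
    · intro hz; exact ⟨z - v, intLattice.sub_mem hz hv, sub_add_cancel z v⟩
  calc infDist (x + v) latSet = infDist (x + v) ((fun y : R2 => y + v) '' latSet) := by rw [himg]
    _ = infDist x latSet := infDist_image hiso

lemma infDist_lat_pos {x : R2} (hx : x ∉ intLattice) : 0 < infDist x latSet :=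
  (lat_closed.notMem_iff_infDist_pos lat_nonempty).1 hx

lemma lat_sub_not_mem_symm {x y : R2} (h : x - y ∉ intLattice) : y - x ∉ intLattice := by
  intro hc
  exact h (by simpa using intLattice.neg_mem hc)

end Prelim
section Avoid

lemma line_null (p d : R2) (hd : d ≠ 0) :
    volume {q : R2 | ∃ t : ℝ, q = p + t • d} = 0 := by
  have hsub : {q : R2 | ∃ t : ℝ, q = p + t • d} ⊆
      (AffineSubspace.mk' p (ℝ ∙ d) : Set R2) := by
    rintro q ⟨t, rfl⟩
    rw [SetLike.mem_coe, AffineSubspace.mem_mk']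
    have : (p + t • d) -ᵥ p = t • d := by
      simp [vsub_eq_sub]
    rw [this]
    exact Submodule.mem_span_singleton.2 ⟨t, rfl⟩
  refine measure_mono_null hsub ?_
  refine Measure.addHaar_affineSubspace volume _ ?_
  intro htop
  have hspan : (ℝ ∙ d) = (⊤ : Submodule ℝ R2) := by
    rw [Submodule.eq_top_iff']
    intro v
    have hv : (v + p) ∈ AffineSubspace.mk' p (ℝ ∙ d) := by rw [htop]; trivial
    rw [AffineSubspace.mem_mk'] at hv
    simpa [vsub_eq_sub] using hv
  have h1 : Module.finrank ℝ (ℝ ∙ d) = 1 := finrank_span_singleton hd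
  rw [hspan] at h1
  have h2 : Module.finrank ℝ (⊤ : Submodule ℝ R2) = 2 := by
    rw [finrank_top]; exact finrank_euclideanSpace_fin
  omega

lemma avoid {U : Set R2} (hU : IsOpen U) (hne : U.Nonempty) {N : Set R2}
    (hN : volume N = 0) : ∃ z ∈ U, z ∉ N := by
  by_contra h
  push_neg at h
  have : U ⊆ N := h
  have := measure_mono_null this hN
  exact absurd this (hU.measure_pos volume hne).ne'

/-- countable unions over the lattice of null sets are null -/
lemma lat_biUnion_null {s : R2 → Set R2} (h : ∀ v ∈ latSet, volume (s v) = 0) :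
    volume (⋃ v ∈ latSet, s v) = 0 :=
  (measure_biUnion_null_iff lat_countable).2 h

end Avoid
section Stage

/-- The bump function at center `c` (mod the lattice), radius `r`. -/
def bump (r : ℝ) (c : R2) (x : R2) : ℝ := max (1 - infDist (x - c) latSet / r) 0

lemma bump_nonneg (r : ℝ) (c x : R2) : 0 ≤ bump r c x := le_max_right _ _

lemma bump_le_one {r : ℝ} (hr : 0 < r) (c x : R2) : bump r c x ≤ 1 := by
  apply max_le _ zero_le_one
  have h0 : 0 ≤ infDist (x - c) latSet := infDist_nonneg
  have : 0 ≤ infDist (x - c) latSet / r := div_nonneg h0 hr.le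
  linarith

lemma bump_self {r : ℝ} (hr : 0 < r) (c : R2) : bump r c c = 1 := by
  unfold bump
  rw [sub_self, infDist_zero_of_mem (show (0:R2) ∈ latSet from intLattice.zero_mem)]
  norm_num

lemma bump_eq_zero_of_far {r : ℝ} (hr : 0 < r) {c x : R2}
    (h : r ≤ infDist (x - c) latSet) : bump r c x = 0 := by
  unfold bump
  apply max_eq_right
  have : 1 ≤ infDist (x - c) latSet / r := (one_le_div hr).2 h
  linarith

lemma bump_pos_infDist {r : ℝ} (hr : 0 < r) {c x : R2} (h : bump r c x ≠ 0) :
    infDist (x - c) latSet < r := by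
  by_contra hc
  exact h (bump_eq_zero_of_far hr (not_lt.1 hc))

lemma bump_lip {r : ℝ} (hr : 0 < r) (c : R2) (x y : R2) :
    |bump r c x - bump r c y| ≤ dist x y / r := by
  have h1 : |(1 - infDist (x - c) latSet / r) - (1 - infDist (y - c) latSet / r)| ≤
      dist x y / r := by
    have h2 : |infDist (x - c) latSet - infDist (y - c) latSet| ≤ dist x y := by
      rw [abs_sub_le_iff]
      constructor
      · have := infDist_le_infDist_add_dist (x := x - c) (y := y - c) (s := latSet)
        have hd : dist (x - c) (y - c) = dist x y := by
          rw [dist_eq_norm, dist_eq_norm]; congr 1; abel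
        linarith [hd ▸ this]
      · have := infDist_le_infDist_add_dist (x := y - c) (y := x - c) (s := latSet)
        have hd : dist (y - c) (x - c) = dist y x := by
          rw [dist_eq_norm, dist_eq_norm]; congr 1; abel
        rw [hd, dist_comm] at this
        linarith
    have heq : (1 - infDist (x - c) latSet / r) - (1 - infDist (y - c) latSet / r)
        = (infDist (y - c) latSet - infDist (x - c) latSet) / r := by
      field_simp
      ring
    rw [heq, abs_div, abs_of_pos hr]
    have h2' : |infDist (y - c) latSet - infDist (x - c) latSet| ≤ dist x y := by
      rw [abs_sub_comm]; exact h2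
    gcongr
  calc |bump r c x - bump r c y| ≤
      |(1 - infDist (x - c) latSet / r) - (1 - infDist (y - c) latSet / r)| :=
        abs_max_sub_max_le_abs _ _ _
    _ ≤ dist x y / r := h1

lemma bump_translate {r : ℝ} (c x : R2) {w : R2} (hw : w ∈ intLattice) :
    bump r c (x + w) = bump r c x := by
  unfold bump
  rw [show x + w - c = (x - c) + w by abel, infDist_lat_add _ hw]

/-- One simultaneous stage of small disjoint moves. -/
lemma stage_homeo (K : ℕ) (p v : ℕ → R2) (r β : ℝ) (hr : 0 < r) (hβ0 : 0 ≤ β)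
    (hsep : ∀ k < K, ∀ l < K, k ≠ l → 3 * r ≤ infDist (p k - p l) latSet)
    (hv : ∀ k < K, ‖v k‖ ≤ r / 3) (hvβ : ∀ k < K, ‖v k‖ ≤ β) :
    ∃ u : R2 ≃ₜ R2, Equivariant u ∧ (∀ k < K, u (p k) = p k + v k) ∧
      (∀ x : R2, dist (u x) x ≤ β) := by
  classical
  set φ : ℕ → R2 → ℝ := fun k x => bump r (p k) x with hφ
  set V : R2 → R2 := fun x => ∑ k ∈ Finset.range K, φ k x • v k with hV
  -- disjointness of supports
  have hdisj : ∀ x : R2, ∀ k < K, ∀ l < K, k ≠ l → φ k x ≠ 0 → φ l x = 0 := by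
    intro x k hk l hl hkl hknz
    by_contra hlnz
    have h1 : infDist (x - p k) latSet < r := bump_pos_infDist hr hknz
    have h2 : infDist (x - p l) latSet < r := bump_pos_infDist hr hlnz
    obtain ⟨wk, hwk, hwk'⟩ := (infDist_lt_iff lat_nonempty).1 h1
    obtain ⟨wl, hwl, hwl'⟩ := (infDist_lt_iff lat_nonempty).1 h2
    have hmem : wl - wk ∈ latSet := intLattice.sub_mem hwl hwk
    have : infDist (p k - p l) latSet ≤ dist (p k - p l) (wl - wk) :=
      infDist_le_dist_of_mem hmem
    have hnorm : dist (p k - p l) (wl - wk) < 2 * r := by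
      have : p k - p l - (wl - wk) = (x - p l - wl) - (x - p k - wk) := by abel
      rw [dist_eq_norm, this]
      calc ‖(x - p l - wl) - (x - p k - wk)‖ ≤ ‖x - p l - wl‖ + ‖x - p k - wk‖ :=
            norm_sub_le _ _
        _ < r + r := by
            rw [dist_eq_norm] at hwk' hwl'
            exact add_lt_add hwl' hwk'
        _ = 2 * r := by ring
    have := hsep k hk l hl hkl
    linarith
  -- evaluation lemmas
  have hVone : ∀ x : R2, ∀ k, k < K → φ k x ≠ 0 → V x = φ k x • v k := by
    intro x k hk hknz
    rw [hV]
    refine Finset.sum_eq_single k ?_ ?_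
    · intro l hl hlk
      by_cases hlz : φ l x = 0
      · rw [hlz]; simp
      · exact absurd (hdisj x l (Finset.mem_range.1 hl) k hk hlk hlz) hknz
    · intro hk'
      exact absurd (Finset.mem_range.2 hk) hk'
  have hVzero : ∀ x : R2, (∀ k < K, φ k x = 0) → V x = 0 := by
    intro x h
    rw [hV]
    apply Finset.sum_eq_zero
    intro k hk
    rw [h k (Finset.mem_range.1 hk)]
    simp
  -- norm bound on V
  have hVnorm : ∀ x : R2, ‖V x‖ ≤ β := by
    intro x
    by_cases hex : ∃ k < K, φ k x ≠ 0
    · obtain ⟨k, hk, hknz⟩ := hex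
      rw [hVone x k hk hknz, norm_smul]
      calc ‖φ k x‖ * ‖v k‖ ≤ 1 * β := by
            apply mul_le_mul _ (hvβ k hk) (norm_nonneg _) zero_le_one
            rw [Real.norm_eq_abs, abs_of_nonneg (bump_nonneg _ _ _)]
            exact bump_le_one hr _ _
        _ = β := one_mul β
    · push_neg at hex
      rw [hVzero x hex]
      simpa using hβ0
  -- Lipschitz bound on V
  have hVlip : ∀ x y : R2, ‖V x - V y‖ ≤ (2 / 3) * dist x y := by
    intro x y
    have hd0 : 0 ≤ dist x y := dist_nonneg
    have hbd : ∀ z z' : R2, ∀ k < K, φ k z' = 0 → φ k z ≠ 0 → φ k z ≤ dist z z' / r := by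
      intro z z' k hk hz' hz
      have := bump_lip hr (p k) z z'
      rw [hφ] at hz' ⊢
      simp only at hz' ⊢
      rw [hz'] at this
      rw [sub_zero] at this
      calc bump r (p k) z ≤ |bump r (p k) z| := le_abs_self _
        _ ≤ dist z z' / r := this
    by_cases hex : ∃ k < K, φ k x ≠ 0
    · obtain ⟨k, hk, hknz⟩ := hex
      by_cases hey : ∃ l < K, φ l y ≠ 0
      · obtain ⟨l, hl, hlnz⟩ := hey
        by_cases hkl : k = l
        · subst hkl
          rw [hVone x k hk hknz, hVone y k hk hlnz, ← sub_smul, norm_smul]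
          have h1 : ‖φ k x - φ k y‖ ≤ dist x y / r := by
            rw [Real.norm_eq_abs]
            exact bump_lip hr (p k) x y
          calc ‖φ k x - φ k y‖ * ‖v k‖ ≤ (dist x y / r) * (r / 3) := by
                apply mul_le_mul h1 (hv k hk) (norm_nonneg _) (div_nonneg hd0 hr.le)
            _ = dist x y / 3 := by field_simp
            _ ≤ (2 / 3) * dist x y := by linarith
        · have hky : φ k y = 0 := hdisj y l hl k hk (fun h => hkl h.symm) hlnz
          have hlx : φ l x = 0 := hdisj x k hk l hl hkl hknz
          rw [hVone x k hk hknz, hVone y l hl hlnz]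
          have h1 : φ k x ≤ dist x y / r := hbd x y k hk hky hknz
          have h2 : φ l y ≤ dist y x / r := hbd y x l hl hlx hlnz
          rw [dist_comm y x] at h2
          calc ‖φ k x • v k - φ l y • v l‖ ≤ ‖φ k x • v k‖ + ‖φ l y • v l‖ :=
                norm_sub_le _ _
            _ ≤ (dist x y / r) * (r / 3) + (dist x y / r) * (r / 3) := by
                rw [norm_smul, norm_smul]
                apply add_le_add
                · apply mul_le_mul _ (hv k hk) (norm_nonneg _) (div_nonneg hd0 hr.le)
                  rw [Real.norm_eq_abs, abs_of_nonneg (bump_nonneg _ _ _)]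
                  exact h1
                · apply mul_le_mul _ (hv l hl) (norm_nonneg _) (div_nonneg hd0 hr.le)
                  rw [Real.norm_eq_abs, abs_of_nonneg (bump_nonneg _ _ _)]
                  exact h2
            _ = (2 / 3) * dist x y := by field_simp; ring
      · push_neg at hey
        rw [hVone x k hk hknz, hVzero y hey, sub_zero]
        have hky : φ k y = 0 := hey k hk
        have h1 : φ k x ≤ dist x y / r := hbd x y k hk hky hknz
        rw [norm_smul]
        calc ‖φ k x‖ * ‖v k‖ ≤ (dist x y / r) * (r / 3) := by
              apply mul_le_mul _ (hv k hk) (norm_nonneg _) (div_nonneg hd0 hr.le)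
              rw [Real.norm_eq_abs, abs_of_nonneg (bump_nonneg _ _ _)]
              exact h1
          _ = dist x y / 3 := by field_simp
          _ ≤ (2 / 3) * dist x y := by linarith
    · push_neg at hex
      rw [hVzero x hex, zero_sub, norm_neg]
      by_cases hey : ∃ l < K, φ l y ≠ 0
      · obtain ⟨l, hl, hlnz⟩ := hey
        have hlx : φ l x = 0 := hex l hl
        rw [hVone y l hl hlnz]
        have h2 : φ l y ≤ dist y x / r := hbd y x l hl hlx hlnz
        rw [dist_comm y x] at h2
        rw [norm_smul]
        calc ‖φ l y‖ * ‖v l‖ ≤ (dist x y / r) * (r / 3) := by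
              apply mul_le_mul _ (hv l hl) (norm_nonneg _) (div_nonneg hd0 hr.le)
              rw [Real.norm_eq_abs, abs_of_nonneg (bump_nonneg _ _ _)]
              exact h2
          _ = dist x y / 3 := by field_simp
          _ ≤ (2 / 3) * dist x y := by linarith
      · push_neg at hey
        rw [hVzero y hey]
        simpa using mul_nonneg (by norm_num : (0:ℝ) ≤ 2/3) hd0
  -- continuity of V
  have hVcont : Continuous V := by
    rw [hV]
    apply continuous_finset_sum
    intro k _
    refine (?_ : Continuous fun x : R2 => φ k x).smul (continuous_const : Continuous fun _ : R2 => v k)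
    have : Continuous fun x : R2 => infDist (x - p k) latSet :=
      (continuous_infDist_pt _).comp (continuous_id.sub continuous_const)
    exact ((continuous_const.sub (this.div_const r)).max continuous_const)
  set u : R2 → R2 := fun x => x + V x with hu
  -- expansion bound
  have hexp : ∀ x y : R2, dist x y ≤ 3 * dist (u x) (u y) := by
    intro x y
    have h1 : ‖x - y‖ ≤ ‖u x - u y‖ + ‖V x - V y‖ := by
      have : x - y = (u x - u y) - (V x - V y) := by rw [hu]; simp only; abel
      rw [this]
      exact norm_sub_le _ _
    have h2 := hVlip x y
    rw [dist_eq_norm, dist_eq_norm] at *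
    linarith
  have hinj : Function.Injective u := by
    intro x y hxy
    have := hexp x y
    rw [hxy] at this
    simp only [dist_self, mul_zero] at this
    exact dist_le_zero.1 this
  have hsurj : Function.Surjective u := by
    intro y
    have hcon : ContractingWith (2/3 : NNReal) (fun z : R2 => y - V z) := by
      constructor
      · rw [← NNReal.coe_lt_coe]
        norm_num
      · apply LipschitzWith.of_dist_le_mul
        intro a b
        have heq : dist (y - V a) (y - V b) = ‖V a - V b‖ := by
          rw [dist_eq_norm, show (y - V a) - (y - V b) = V b - V a from by abel, norm_sub_rev]
        rw [heq]
        have hc : ((2/3 : NNReal) : ℝ) = 2/3 := by norm_num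
        rw [hc]
        exact hVlip a b
    set z := ContractingWith.fixedPoint (fun z : R2 => y - V z) hcon with hz
    have hfix : y - V z = z := ContractingWith.fixedPoint_isFixedPt hcon
    refine ⟨z, ?_⟩
    show z + V z = y
    have := sub_eq_iff_eq_add.1 hfix
    rw [this]
  set e : R2 ≃ R2 := Equiv.ofBijective u ⟨hinj, hsurj⟩ with he
  have heu : ∀ x, e x = u x := fun x => rfl
  have hue : ∀ y, u (e.symm y) = y := fun y => e.apply_symm_apply y
  have hsymm_lip : ∀ a b : R2, dist (e.symm a) (e.symm b) ≤ 3 * dist a b := by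
    intro a b
    have := hexp (e.symm a) (e.symm b)
    rw [hue, hue] at this
    exact this
  refine ⟨⟨e, ?_, ?_⟩, ?_, ?_, ?_⟩
  · show Continuous u
    exact continuous_id.add hVcont
  · show Continuous e.symm
    apply LipschitzWith.continuous (K := 3)
    apply LipschitzWith.of_dist_le_mul
    intro a b
    simpa using hsymm_lip a b
  · -- equivariance
    intro x w hw
    show u (x + w) = u x + w
    rw [hu]
    simp only
    have : V (x + w) = V x := by
      rw [hV]
      apply Finset.sum_congr rfl
      intro k _
      rw [hφ]
      simp only
      rw [bump_translate _ _ hw]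
    rw [this]
    abel
  · -- values at the p k
    intro k hk
    show u (p k) = p k + v k
    rw [hu]
    simp only
    congr 1
    rw [hVone (p k) k hk]
    · rw [hφ]
      simp only
      rw [bump_self hr]
      simp
    · rw [hφ]
      simp only
      rw [bump_self hr]
      norm_num
  · -- displacement
    intro x
    show dist (u x) x ≤ β
    rw [hu, dist_eq_norm]
    simp only
    rw [show x + V x - x = V x by abel]
    exact hVnorm x

end Stage
section Multi

lemma multi_stage (K : ℕ) (β : ℝ) (hβ0 : 0 ≤ β) (m : ℕ) (q : ℕ → ℕ → R2)
    (hstep : ∀ t < m, ∃ r, 0 < r ∧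
      (∀ k < K, ∀ l < K, k ≠ l → 3 * r ≤ infDist (q t k - q t l) latSet) ∧
      (∀ k < K, ‖q (t+1) k - q t k‖ ≤ min (r/3) β)) :
    ∃ H : R2 ≃ₜ R2, Equivariant H ∧ (∀ k < K, H (q 0 k) = q m k) ∧
      (∀ x : R2, dist (H x) x ≤ m * β) := by
  induction m with
  | zero =>
    refine ⟨Homeomorph.refl R2, ?_, ?_, ?_⟩
    · intro x w hw; simp
    · intro k hk; simp
    · intro x; simp
  | succ m ih =>
    obtain ⟨H, hHe, hH0, hHd⟩ := ih (fun t ht => hstep t (ht.trans (Nat.lt_succ_self m)))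
    obtain ⟨r, hr, hsep, hst⟩ := hstep m (Nat.lt_succ_self m)
    obtain ⟨u, hue, hup, hud⟩ := stage_homeo K (q m) (fun k => q (m+1) k - q m k) r β hr hβ0
      hsep (fun k hk => (hst k hk).trans (min_le_left _ _))
      (fun k hk => (hst k hk).trans (min_le_right _ _))
    refine ⟨H.trans u, ?_, ?_, ?_⟩
    · intro x w hw
      show u (H (x + w)) = u (H x) + w
      rw [hHe x w hw, hue (H x) w hw]
    · intro k hk
      show u (H (q 0 k)) = q (m+1) k
      rw [hH0 k hk, hup k hk]
      abel
    · intro x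
      show dist (u (H x)) x ≤ (m+1 : ℕ) * β
      calc dist (u (H x)) x ≤ dist (u (H x)) (H x) + dist (H x) x := dist_triangle _ _ _
        _ ≤ β + m * β := add_le_add (hud (H x)) (hHd x)
        _ = (m+1 : ℕ) * β := by push_cast; ring

end Multi
section Sep

lemma pair_sep (A B : R2) (h : ∀ s ∈ Set.Icc (0:ℝ) 1, (1-s)•A + s•B ∉ intLattice) :
    ∃ ρ, 0 < ρ ∧ ∀ s ∈ Set.Icc (0:ℝ) 1, ρ ≤ infDist ((1-s)•A + s•B) latSet := by
  have hcont : ContinuousOn (fun s : ℝ => infDist ((1-s)•A + s•B) latSet) (Set.Icc 0 1) := by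
    apply Continuous.continuousOn
    apply (continuous_infDist_pt _).comp
    exact ((continuous_const.sub continuous_id).smul continuous_const).add
      (continuous_id.smul continuous_const)
  obtain ⟨s₀, hs₀, hmin⟩ := isCompact_Icc.exists_isMinOn (Set.nonempty_Icc.2 zero_le_one) hcont
  refine ⟨infDist ((1-s₀)•A + s₀•B) latSet, infDist_lat_pos (h s₀ hs₀), ?_⟩
  intro s hs
  exact hmin hs

lemma finite_pos_min (K : ℕ) (f : ℕ → ℝ) (h : ∀ k < K, 0 < f k) :
    ∃ ρ, 0 < ρ ∧ ∀ k < K, ρ ≤ f k := by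
  induction K with
  | zero => exact ⟨1, one_pos, fun k hk => absurd hk (Nat.not_lt_zero k)⟩
  | succ K ih =>
    obtain ⟨ρ, hρ, hall⟩ := ih (fun k hk => h k (hk.trans (Nat.lt_succ_self K)))
    refine ⟨min ρ (f K), lt_min hρ (h K (Nat.lt_succ_self K)), ?_⟩
    intro k hk
    rcases Nat.lt_succ_iff_lt_or_eq.1 hk with h' | h'
    · exact (min_le_left _ _).trans (hall k h')
    · subst h'
      exact min_le_right _ _

lemma seg_sep (K : ℕ) (c d : ℕ → R2)
    (h : ∀ k < K, ∀ l < K, k ≠ l → ∀ s ∈ Set.Icc (0:ℝ) 1,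
      (1-s)•(c k - c l) + s•(d k - d l) ∉ intLattice) :
    ∃ ρ, 0 < ρ ∧ ∀ k < K, ∀ l < K, k ≠ l → ∀ s ∈ Set.Icc (0:ℝ) 1,
      ρ ≤ infDist ((1-s)•(c k - c l) + s•(d k - d l)) latSet := by
  rcases Nat.eq_zero_or_pos K with hK | hK
  · exact ⟨1, one_pos, fun k hk => by omega⟩
  have hpair : ∀ e : ℕ, ∃ ρ, 0 < ρ ∧ (e / K < K → e % K < K → e / K ≠ e % K →
      ∀ s ∈ Set.Icc (0:ℝ) 1,
        ρ ≤ infDist ((1-s)•(c (e/K) - c (e%K)) + s•(d (e/K) - d (e%K))) latSet) := by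
    intro e
    by_cases hc : e / K < K ∧ e % K < K ∧ e / K ≠ e % K
    · obtain ⟨h1, h2, h3⟩ := hc
      obtain ⟨ρ, hρ, hmin⟩ := pair_sep (c (e/K) - c (e%K)) (d (e/K) - d (e%K))
        (h _ h1 _ h2 h3)
      exact ⟨ρ, hρ, fun _ _ _ => hmin⟩
    · refine ⟨1, one_pos, fun h1 h2 h3 => absurd ⟨h1, h2, h3⟩ hc⟩
  choose ρf hρf using hpair
  obtain ⟨ρ, hρ, hall⟩ := finite_pos_min (K*K) ρf (fun e _ => (hρf e).1)
  refine ⟨ρ, hρ, ?_⟩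
  intro k hk l hl hkl s hs
  set e := K * k + l with he
  have heK : e / K = k := by
    rw [he, Nat.mul_add_div hK, Nat.div_eq_of_lt hl, Nat.add_zero]
  have heM : e % K = l := by
    rw [he, Nat.mul_add_mod, Nat.mod_eq_of_lt hl]
  have heLT : e < K * K := by
    calc e = K * k + l := he
      _ < K * k + K := by omega
      _ = K * (k + 1) := by ring
      _ ≤ K * K := Nat.mul_le_mul_left K hk
  have := (hρf e).2
  rw [heK, heM] at this
  exact le_trans (hall e heLT) (this hk hl hkl s hs)

end Sep
section Segment

lemma segment_homeo (K : ℕ) (c d : ℕ → R2) (βseg : ℝ) (hβ : 0 < βseg)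
    (hlen : ∀ k < K, ‖d k - c k‖ ≤ βseg)
    (hcf : ∀ k < K, ∀ l < K, k ≠ l → ∀ s ∈ Set.Icc (0:ℝ) 1,
      (1-s)•(c k - c l) + s•(d k - d l) ∉ intLattice) :
    ∃ H : R2 ≃ₜ R2, Equivariant H ∧ (∀ k < K, H (c k) = d k) ∧
      (∀ x : R2, dist (H x) x ≤ βseg) := by
  obtain ⟨ρ, hρ, hsep⟩ := seg_sep K c d hcf
  set j : ℕ := max 1 ⌈(9*βseg)/ρ⌉₊ with hj
  have hj1 : 1 ≤ j := le_max_left _ _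
  have hjpos : (0:ℝ) < (j:ℝ) := by exact_mod_cast Nat.lt_of_lt_of_le Nat.zero_lt_one hj1
  have hjρ : 9 * βseg ≤ (j:ℝ) * ρ := by
    have h1 : (9*βseg)/ρ ≤ (⌈(9*βseg)/ρ⌉₊ : ℝ) := Nat.le_ceil _
    have h2 : (⌈(9*βseg)/ρ⌉₊ : ℝ) ≤ (j:ℝ) := by
      exact_mod_cast le_max_right 1 ⌈(9*βseg)/ρ⌉₊
    have := h1.trans h2
    calc 9 * βseg = ((9*βseg)/ρ) * ρ := by field_simp
      _ ≤ (j:ℝ) * ρ := by gcongr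
  set q : ℕ → ℕ → R2 := fun t k => c k + ((t:ℝ)/(j:ℝ)) • (d k - c k) with hq
  have hq0 : ∀ k, q 0 k = c k := by
    intro k; rw [hq]; simp
  have hqj : ∀ k, q j k = d k := by
    intro k
    rw [hq]
    simp only
    rw [div_self hjpos.ne', one_smul]
    abel
  have hqdiff : ∀ t k l, q t k - q t l =
      (1 - (t:ℝ)/(j:ℝ))•(c k - c l) + ((t:ℝ)/(j:ℝ))•(d k - d l) := by
    intro t k l
    rw [hq]
    simp only
    module
  have hqstep : ∀ t k, q (t+1) k - q t k = ((1:ℝ)/(j:ℝ)) • (d k - c k) := by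
    intro t k
    rw [hq]
    simp only
    push_cast
    module
  have hstep : ∀ t < j, ∃ r, 0 < r ∧
      (∀ k < K, ∀ l < K, k ≠ l → 3 * r ≤ infDist (q t k - q t l) latSet) ∧
      (∀ k < K, ‖q (t+1) k - q t k‖ ≤ min (r/3) (βseg/(j:ℝ))) := by
    intro t ht
    refine ⟨ρ/3, by linarith, ?_, ?_⟩
    · intro k hk l hl hkl
      rw [hqdiff]
      have hs : (t:ℝ)/(j:ℝ) ∈ Set.Icc (0:ℝ) 1 := by
        constructor
        · positivity
        · rw [div_le_one hjpos]
          exact_mod_cast ht.le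
      have := hsep k hk l hl hkl _ hs
      linarith
    · intro k hk
      rw [hqstep]
      rw [norm_smul, Real.norm_eq_abs, abs_of_pos (by positivity : (0:ℝ) < 1/(j:ℝ))]
      apply le_min
      · have h1 : (1/(j:ℝ)) * ‖d k - c k‖ ≤ (1/(j:ℝ)) * βseg :=
          mul_le_mul_of_nonneg_left (hlen k hk) (by positivity)
        have h2 : (1/(j:ℝ)) * βseg ≤ ρ/3/3 := by
          rw [div_mul_eq_mul_div, one_mul]
          rw [div_le_iff₀ hjpos]
          nlinarith [hjρ]
        have h3 : (ρ/3/3 : ℝ) = ρ/3/3 := rfl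
        calc (1/(j:ℝ)) * ‖d k - c k‖ ≤ ρ/3/3 := h1.trans h2
          _ = ρ/3/3 := h3
      · rw [div_mul_eq_mul_div, one_mul]
        gcongr
        exact hlen k hk
  obtain ⟨H, hHe, hH0, hHd⟩ := multi_stage K (βseg/(j:ℝ))
    (le_of_lt (div_pos hβ hjpos)) j q hstep
  refine ⟨H, hHe, ?_, ?_⟩
  · intro k hk
    have := hH0 k hk
    rw [hq0, hqj] at this
    exact this
  · intro x
    calc dist (H x) x ≤ (j:ℝ) * (βseg/(j:ℝ)) := hHd x
      _ = βseg := by field_simp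

end Segment
section Move

def lineSet (p dir : R2) : Set R2 := {q : R2 | ∃ t : ℝ, q = p + t • dir}

lemma exists_mid (K : ℕ) (a b : ℕ → R2)
    (ha : ∀ k < K, ∀ l < K, k ≠ l → a k - a l ∉ intLattice)
    (hb : ∀ k < K, ∀ l < K, k ≠ l → b k - b l ∉ intLattice)
    (δ : ℝ) (hδ : 0 < δ) :
    ∃ mid : ℕ → R2, ∀ l < K, dist (mid l) ((1/2:ℝ)•(a l + b l)) ≤ δ ∧
      ∀ k < l, (∀ s ∈ Set.Icc (0:ℝ) 1,
          (1-s)•(a k - a l) + s•(mid k - mid l) ∉ intLattice) ∧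
        (∀ s ∈ Set.Icc (0:ℝ) 1,
          (1-s)•(mid k - mid l) + s•(b k - b l) ∉ intLattice) := by
  suffices h : ∀ T, T ≤ K → ∃ mid : ℕ → R2, ∀ l < T,
      dist (mid l) ((1/2:ℝ)•(a l + b l)) ≤ δ ∧
      ∀ k < l, (∀ s ∈ Set.Icc (0:ℝ) 1,
          (1-s)•(a k - a l) + s•(mid k - mid l) ∉ intLattice) ∧
        (∀ s ∈ Set.Icc (0:ℝ) 1,
          (1-s)•(mid k - mid l) + s•(b k - b l) ∉ intLattice) by
    exact h K le_rfl
  intro T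
  induction T with
  | zero => exact fun _ => ⟨fun _ => 0, fun l hl => absurd hl (Nat.not_lt_zero l)⟩
  | succ T ih =>
    intro hTK
    have hTK' : T < K := hTK
    obtain ⟨mid, hmid⟩ := ih (le_of_lt hTK')
    -- the bad (null) set
    set N : Set R2 := ⋃ (k : ℕ), ⋃ (_ : k < T), ⋃ v ∈ latSet,
      (lineSet (mid k - v) (a k - a T - v) ∪ lineSet (mid k - v) (b k - b T - v)) with hNdef
    have hNnull : volume N = 0 := by
      rw [hNdef]
      apply measure_iUnion_null
      intro k
      apply measure_iUnion_null
      intro hkT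
      apply lat_biUnion_null
      intro v hv
      apply measure_union_null
      · apply line_null
        intro h0
        have : a k - a T ∈ intLattice := by
          have : a k - a T = v := by
            have := sub_eq_zero.1 h0
            exact this
          rw [this]; exact hv
        exact ha k (hkT.trans hTK') T hTK' (Nat.ne_of_lt hkT) this
      · apply line_null
        intro h0
        have : b k - b T ∈ intLattice := by
          have : b k - b T = v := sub_eq_zero.1 h0
          rw [this]; exact hv
        exact hb k (hkT.trans hTK') T hTK' (Nat.ne_of_lt hkT) this
    obtain ⟨z, hzball, hzN⟩ := avoid
      (isOpen_ball (x := (1/2:ℝ)•(a T + b T)) (ε := δ)) (nonempty_ball.2 hδ) hNnull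
    refine ⟨Function.update mid T z, ?_⟩
    intro l hl
    rcases Nat.lt_succ_iff_lt_or_eq.1 hl with hlT | hlT
    · -- old indices
      obtain ⟨h1, h2⟩ := hmid l hlT
      constructor
      · rwa [Function.update_of_ne (Nat.ne_of_lt hlT)]
      · intro k hk
        rw [Function.update_of_ne (Nat.ne_of_lt hlT),
          Function.update_of_ne (Nat.ne_of_lt (hk.trans hlT))]
        exact h2 k hk
    · -- new index l = T
      subst hlT
      constructor
      · rw [Function.update_self]
        exact (mem_ball.1 hzball).le
      · intro k hk
        rw [Function.update_self, Function.update_of_ne (Nat.ne_of_lt hk)]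
        have hkK : k < K := hk.trans hTK'
        have hzNk : ∀ v ∈ latSet,
            z ∉ lineSet (mid k - v) (a k - a l - v) ∧
            z ∉ lineSet (mid k - v) (b k - b l - v) := by
          intro v hv
          constructor
          · intro hmem
            exact hzN (by
              rw [hNdef]
              exact Set.mem_iUnion.2 ⟨k, Set.mem_iUnion.2 ⟨hk, Set.mem_biUnion hv
                (Set.mem_union_left _ hmem)⟩⟩)
          · intro hmem
            exact hzN (by
              rw [hNdef]
              exact Set.mem_iUnion.2 ⟨k, Set.mem_iUnion.2 ⟨hk, Set.mem_biUnion hv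
                (Set.mem_union_right _ hmem)⟩⟩)
        constructor
        · -- first segment
          intro s hs hcol
          set v : R2 := (1-s)•(a k - a l) + s•(mid k - z) with hvdef
          have hvmem : v ∈ intLattice := hcol
          rcases eq_or_ne s 0 with hs0 | hs0
          · rw [hvdef, hs0] at hvmem
            simp only [sub_zero, one_smul, zero_smul, add_zero] at hvmem
            exact ha k hkK l hTK' (Nat.ne_of_lt hk) hvmem
          · have key : s • z = s • (mid k - v) + (1-s) • (a k - a l - v) := by
              rw [hvdef]; module
            have key2 : s • ((mid k - v) + ((1-s)/s) • (a k - a l - v)) =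
                s • (mid k - v) + (1-s) • (a k - a l - v) := by
              rw [smul_add, smul_smul]
              congr 1
              rw [show s * ((1-s)/s) = 1 - s from by field_simp]
            have hz' : z = (mid k - v) + ((1-s)/s) • (a k - a l - v) :=
              smul_right_injective R2 hs0 (key.trans key2.symm)
            exact (hzNk v hvmem).1 ⟨(1-s)/s, hz'⟩
        · -- second segment
          intro s hs hcol
          set v : R2 := (1-s)•(mid k - z) + s•(b k - b l) with hvdef
          have hvmem : v ∈ intLattice := hcol
          rcases eq_or_ne s 1 with hs1 | hs1
          · rw [hvdef, hs1] at hvmem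
            simp only [sub_self, zero_smul, one_smul, zero_add] at hvmem
            exact hb k hkK l hTK' (Nat.ne_of_lt hk) hvmem
          · have hs1' : (1:ℝ) - s ≠ 0 := sub_ne_zero.2 (Ne.symm hs1)
            have key : (1-s) • z = (1-s) • (mid k - v) + s • (b k - b l - v) := by
              rw [hvdef]; module
            have key2 : (1-s) • ((mid k - v) + (s/(1-s)) • (b k - b l - v)) =
                (1-s) • (mid k - v) + s • (b k - b l - v) := by
              rw [smul_add, smul_smul]
              congr 1
              rw [show (1-s) * (s/(1-s)) = s from by field_simp]
            have hz' : z = (mid k - v) + (s/(1-s)) • (b k - b l - v) :=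
              smul_right_injective R2 hs1' (key.trans key2.symm)
            exact (hzNk v hvmem).2 ⟨s/(1-s), hz'⟩

end Move
section MoveHomeo

lemma neg_collision {X : R2} (h : X ∉ intLattice) : -X ∉ intLattice := by
  intro hc
  exact h (by simpa using intLattice.neg_mem hc)

lemma move_homeo (K : ℕ) (a b : ℕ → R2)
    (ha : ∀ k < K, ∀ l < K, k ≠ l → a k - a l ∉ intLattice)
    (hb : ∀ k < K, ∀ l < K, k ≠ l → b k - b l ∉ intLattice)
    (β γ : ℝ) (hβ0 : 0 ≤ β) (hγ : 0 < γ)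
    (hab : ∀ k < K, ‖b k - a k‖ ≤ β) :
    ∃ h : R2 ≃ₜ R2, Equivariant h ∧ (∀ k < K, h (a k) = b k) ∧
      (∀ x : R2, dist (h x) x ≤ β + γ) := by
  obtain ⟨mid, hmid⟩ := exists_mid K a b ha hb (γ/4) (by linarith)
  have hcf1 : ∀ k < K, ∀ l < K, k ≠ l → ∀ s ∈ Set.Icc (0:ℝ) 1,
      (1-s)•(a k - a l) + s•(mid k - mid l) ∉ intLattice := by
    intro k hk l hl hkl s hs
    rcases lt_or_gt_of_ne hkl with h | h
    · exact ((hmid l hl).2 k h).1 s hs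
    · have := ((hmid k hk).2 l h).1 s hs
      have heq : (1-s)•(a k - a l) + s•(mid k - mid l) =
          -((1-s)•(a l - a k) + s•(mid l - mid k)) := by module
      rw [heq]
      exact neg_collision this
  have hcf2 : ∀ k < K, ∀ l < K, k ≠ l → ∀ s ∈ Set.Icc (0:ℝ) 1,
      (1-s)•(mid k - mid l) + s•(b k - b l) ∉ intLattice := by
    intro k hk l hl hkl s hs
    rcases lt_or_gt_of_ne hkl with h | h
    · exact ((hmid l hl).2 k h).2 s hs
    · have := ((hmid k hk).2 l h).2 s hs
      have heq : (1-s)•(mid k - mid l) + s•(b k - b l) =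
          -((1-s)•(mid l - mid k) + s•(b l - b k)) := by module
      rw [heq]
      exact neg_collision this
  set βseg : ℝ := β/2 + γ/4 with hβseg
  have hβsegpos : 0 < βseg := by rw [hβseg]; linarith
  have hlen1 : ∀ k < K, ‖mid k - a k‖ ≤ βseg := by
    intro k hk
    have h1 : dist (mid k) ((1/2:ℝ)•(a k + b k)) ≤ γ/4 := (hmid k hk).1
    have h2 : ((1/2:ℝ)•(a k + b k)) - a k = (1/2:ℝ)•(b k - a k) := by module
    calc ‖mid k - a k‖ = ‖(mid k - (1/2:ℝ)•(a k + b k)) + ((1/2:ℝ)•(a k + b k) - a k)‖ := by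
          congr 1; abel
      _ ≤ ‖mid k - (1/2:ℝ)•(a k + b k)‖ + ‖(1/2:ℝ)•(a k + b k) - a k‖ := norm_add_le _ _
      _ ≤ γ/4 + (1/2) * β := by
          apply add_le_add
          · rw [← dist_eq_norm]; exact h1
          · rw [h2, norm_smul, Real.norm_eq_abs]
            rw [abs_of_pos (by norm_num : (0:ℝ) < 1/2)]
            exact mul_le_mul_of_nonneg_left (hab k hk) (by norm_num)
      _ = βseg := by rw [hβseg]; ring
  have hlen2 : ∀ k < K, ‖b k - mid k‖ ≤ βseg := by
    intro k hk
    have h1 : dist (mid k) ((1/2:ℝ)•(a k + b k)) ≤ γ/4 := (hmid k hk).1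
    have h2 : b k - ((1/2:ℝ)•(a k + b k)) = (1/2:ℝ)•(b k - a k) := by module
    calc ‖b k - mid k‖ = ‖(b k - (1/2:ℝ)•(a k + b k)) + ((1/2:ℝ)•(a k + b k) - mid k)‖ := by
          congr 1; abel
      _ ≤ ‖b k - (1/2:ℝ)•(a k + b k)‖ + ‖(1/2:ℝ)•(a k + b k) - mid k‖ := norm_add_le _ _
      _ ≤ (1/2) * β + γ/4 := by
          apply add_le_add
          · rw [h2, norm_smul, Real.norm_eq_abs]
            rw [abs_of_pos (by norm_num : (0:ℝ) < 1/2)]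
            exact mul_le_mul_of_nonneg_left (hab k hk) (by norm_num)
          · rw [← dist_eq_norm, dist_comm]; exact h1
      _ = βseg := by rw [hβseg]; ring
  obtain ⟨H1, hH1e, hH1v, hH1d⟩ := segment_homeo K a mid βseg hβsegpos hlen1 hcf1
  obtain ⟨H2, hH2e, hH2v, hH2d⟩ := segment_homeo K mid b βseg hβsegpos hlen2 hcf2
  refine ⟨H1.trans H2, ?_, ?_, ?_⟩
  · intro x w hw
    show H2 (H1 (x + w)) = H2 (H1 x) + w
    rw [hH1e x w hw, hH2e (H1 x) w hw]
  · intro k hk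
    show H2 (H1 (a k)) = b k
    rw [hH1v k hk, hH2v k hk]
  · intro x
    calc dist (H2 (H1 x)) x ≤ dist (H2 (H1 x)) (H1 x) + dist (H1 x) x := dist_triangle _ _ _
      _ ≤ βseg + βseg := add_le_add (hH2d (H1 x)) (hH1d x)
      _ ≤ β + γ := by rw [hβseg]; linarith

end MoveHomeo
section Descend

lemma symm_equivariant (G : R2 ≃ₜ R2) (hG : Equivariant ⇑G) : Equivariant ⇑G.symm := by
  intro x w hw
  apply G.injective
  rw [G.apply_symm_apply, hG _ w hw, G.apply_symm_apply]

lemma pr_continuous : Continuous pr := continuous_quotient_mk'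

lemma pr_eq_of_lattice {x y : R2} (h : -x + y ∈ intLattice) : pr x = pr y :=
  (QuotientAddGroup.eq (s := intLattice)).2 h

lemma descend (G : R2 ≃ₜ R2) (hG : Equivariant ⇑G) : ∃ g : T2 ≃ₜ T2, IsLift g G := by
  have hGs := symm_equivariant G hG
  have resp : ∀ (H : R2 ≃ₜ R2), Equivariant ⇑H → ∀ (x y : R2),
      (QuotientAddGroup.leftRel intLattice) x y → pr (H x) = pr (H y) := by
    intro H hH x y hxy
    have hv : -x + y ∈ intLattice := QuotientAddGroup.leftRel_apply.1 hxy
    have hy : y = x + (-x + y) := by abel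
    apply pr_eq_of_lattice
    rw [hy, hH x _ hv]
    have : -(H x) + (H x + (-x + y)) = -x + y := by abel
    rw [this]
    exact hv
  set gfun : T2 → T2 := fun q => Quotient.liftOn' q (fun z => pr (G z)) (resp G hG)
    with hgfun
  set ginv : T2 → T2 := fun q => Quotient.liftOn' q (fun z => pr (G.symm z)) (resp G.symm hGs)
    with hginv
  have hgmk : ∀ z : R2, gfun (pr z) = pr (G z) := fun z => rfl
  have hgimk : ∀ z : R2, ginv (pr z) = pr (G.symm z) := fun z => rfl
  refine ⟨⟨⟨gfun, ginv, ?_, ?_⟩, ?_, ?_⟩, ?_, ?_⟩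
  · intro q
    refine Quotient.inductionOn' q ?_
    intro z
    show ginv (gfun (pr z)) = pr z
    rw [hgmk, hgimk, Homeomorph.symm_apply_apply]
  · intro q
    refine Quotient.inductionOn' q ?_
    intro z
    show gfun (ginv (pr z)) = pr z
    rw [hgimk, hgmk, Homeomorph.apply_symm_apply]
  · exact Continuous.quotient_liftOn' (pr_continuous.comp G.continuous) _
  · exact Continuous.quotient_liftOn' (pr_continuous.comp G.symm.continuous) _
  · intro z
    exact (hgmk z).symm
  · intro x w hw
    exact hG x w hw

lemma iter_equivariant (G : R2 ≃ₜ R2) (hG : Equivariant ⇑G) (m : ℕ) :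
    ∀ x : R2, ∀ w ∈ intLattice, (⇑G)^[m] (x + w) = (⇑G)^[m] x + w := by
  induction m with
  | zero => intro x w hw; simp
  | succ m ih =>
    intro x w hw
    rw [Function.iterate_succ_apply, hG x w hw, Function.iterate_succ_apply, ih _ w hw]

lemma iter_periodic (G : R2 ≃ₜ R2) (hG : Equivariant ⇑G) (n : ℕ) (z wv : R2)
    (hwv : wv ∈ intLattice) (h : (⇑G)^[n] z = z + wv) :
    ∀ m : ℕ, (⇑G)^[m*n] z = z + m • wv := by
  intro m
  induction m with
  | zero => simp
  | succ m ih =>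
    have hmw : m • wv ∈ intLattice := nsmul_mem hwv m
    have : (m+1)*n = n + m*n := by ring
    rw [this, Function.iterate_add_apply, ih, iter_equivariant G hG n z _ hmw, h,
      succ_nsmul]
    abel

end Descend
section Config

def orbitSet (z : R2) : Set R2 := {q : R2 | q - z ∈ intLattice}

lemma orbitSet_countable (z : R2) : (orbitSet z).Countable := by
  have h : orbitSet z ⊆ (fun v => z + v) '' latSet := by
    intro q hq
    exact ⟨q - z, hq, add_sub_cancel z q⟩
  exact (lat_countable.image _).mono h

lemma orbitSet_null (z : R2) : volume (orbitSet z) = 0 :=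
  (orbitSet_countable z).measure_zero volume

lemma image_countable_null (F : R2 ≃ₜ R2) {S : Set R2} (hS : S.Countable) :
    volume (F '' S) = 0 :=
  (hS.image _).measure_zero volume

lemma choose_config (F : R2 ≃ₜ R2) (n : ℕ) (hn : 1 ≤ n) (y : ℕ → R2) (wfin : R2)
    (δ : ℝ) (hδ : 0 < δ) :
    ∃ A : ℕ → R2, A 0 = F (y 0) ∧
      (∀ k, 1 ≤ k → k ≤ n-1 → F.symm (A k) ∈ ball (y k) δ) ∧
      (∀ k, 1 ≤ k → k ≤ n-1 → dist (A k) (F (y k)) < δ) ∧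
      (∀ k ≤ n-1, ∀ l < k, A k - A l ∉ intLattice) ∧
      (∀ k, 1 ≤ k → k ≤ n-1 → ∀ l, 1 ≤ l → l < k →
        F.symm (A k) - F.symm (A l) ∉ intLattice) ∧
      (∀ k, 1 ≤ k → k ≤ n-1 → F.symm (A k) - wfin ∉ intLattice) := by
  suffices h : ∀ T, T ≤ n-1 → ∃ A : ℕ → R2, A 0 = F (y 0) ∧
      (∀ k, 1 ≤ k → k ≤ T → F.symm (A k) ∈ ball (y k) δ) ∧
      (∀ k, 1 ≤ k → k ≤ T → dist (A k) (F (y k)) < δ) ∧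
      (∀ k ≤ T, ∀ l < k, A k - A l ∉ intLattice) ∧
      (∀ k, 1 ≤ k → k ≤ T → ∀ l, 1 ≤ l → l < k →
        F.symm (A k) - F.symm (A l) ∉ intLattice) ∧
      (∀ k, 1 ≤ k → k ≤ T → F.symm (A k) - wfin ∉ intLattice) by
    exact h (n-1) le_rfl
  intro T
  induction T with
  | zero =>
    intro _
    refine ⟨fun _ => F (y 0), rfl, ?_, ?_, ?_, ?_, ?_⟩
    · intro k hk1 hk0; omega
    · intro k hk1 hk0; omega
    · intro k hk l hl; omega
    · intro k hk1 hk0; omega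
    · intro k hk1 hk0; omega
  | succ T ih =>
    intro hTn
    obtain ⟨A, hA0, hA1, hA2, hA3, hA4, hA5⟩ := ih (by omega)
    set N : Set R2 :=
      (⋃ (l : ℕ), ⋃ (_ : l ≤ T), orbitSet (A l)) ∪
      ((⇑F) '' ((⋃ (l : ℕ), ⋃ (_ : 1 ≤ l ∧ l ≤ T), orbitSet (F.symm (A l))) ∪
        orbitSet wfin)) with hNdef
    have hNnull : volume N = 0 := by
      rw [hNdef]
      apply measure_union_null
      · apply measure_iUnion_null
        intro l
        apply measure_iUnion_null
        intro _
        exact orbitSet_null _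
      · apply image_countable_null
        apply Set.Countable.union
        · apply Set.countable_iUnion
          intro l
          apply Set.countable_iUnion
          intro _
          exact orbitSet_countable _
        · exact orbitSet_countable _
    have hUopen : IsOpen (((⇑F) '' ball (y (T+1)) δ) ∩ ball (F (y (T+1))) δ) :=
      (F.isOpenMap _ isOpen_ball).inter isOpen_ball
    have hUne : (((⇑F) '' ball (y (T+1)) δ) ∩ ball (F (y (T+1))) δ).Nonempty :=
      ⟨F (y (T+1)), ⟨y (T+1), mem_ball_self hδ, rfl⟩, mem_ball_self hδ⟩
    obtain ⟨z, hzU, hzN⟩ := avoid hUopen hUne hNnull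
    obtain ⟨hzim, hzb⟩ := hzU
    set A' : ℕ → R2 := Function.update A (T+1) z with hA'
    have hup : ∀ m, m ≠ T+1 → A' m = A m := fun m hm => Function.update_of_ne hm _ _
    have hupT : A' (T+1) = z := Function.update_self _ _ _
    have hzsymm : F.symm z ∈ ball (y (T+1)) δ := by
      obtain ⟨ζ, hζ, rfl⟩ := hzim
      rwa [Homeomorph.symm_apply_apply]
    have hnotim : ∀ S : Set R2, ((⇑F) '' S ⊆ N) → F.symm z ∉ S := by
      intro S hS hmem
      exact hzN (hS ⟨F.symm z, hmem, F.apply_symm_apply z⟩)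
    refine ⟨A', by rw [hup 0 (by omega)]; exact hA0, ?_, ?_, ?_, ?_, ?_⟩
    · intro k hk1 hk2
      rcases Nat.lt_succ_iff_lt_or_eq.1 (Nat.lt_succ_of_le hk2) with h | h
      · rw [hup k (by omega)]
        exact hA1 k hk1 (by omega)
      · rw [h, hupT]
        exact hzsymm
    · intro k hk1 hk2
      rcases Nat.lt_succ_iff_lt_or_eq.1 (Nat.lt_succ_of_le hk2) with h | h
      · rw [hup k (by omega)]
        exact hA2 k hk1 (by omega)
      · rw [h, hupT]
        exact hzb
    · intro k hk2 l hl
      rcases Nat.lt_succ_iff_lt_or_eq.1 (Nat.lt_succ_of_le hk2) with h | h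
      · rw [hup k (by omega), hup l (by omega)]
        exact hA3 k (by omega) l hl
      · rw [h, hupT, hup l (by omega)]
        intro hc
        apply hzN
        rw [hNdef]
        apply Set.mem_union_left
        refine Set.mem_iUnion.2 ⟨l, Set.mem_iUnion.2 ⟨by omega, hc⟩⟩
    · intro k hk1 hk2 l hl1 hl2
      rcases Nat.lt_succ_iff_lt_or_eq.1 (Nat.lt_succ_of_le hk2) with h | h
      · rw [hup k (by omega), hup l (by omega)]
        exact hA4 k hk1 (by omega) l hl1 hl2
      · rw [h, hupT, hup l (by omega)]
        intro hc
        refine hnotim (orbitSet (F.symm (A l))) ?_ hc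
        intro q hq
        rw [hNdef]
        apply Set.mem_union_right
        apply Set.image_mono (Set.subset_union_left)
        obtain ⟨q', hq', rfl⟩ := hq
        exact ⟨q', Set.mem_iUnion.2 ⟨l, Set.mem_iUnion.2 ⟨⟨hl1, by omega⟩, hq'⟩⟩, rfl⟩
    · intro k hk1 hk2
      rcases Nat.lt_succ_iff_lt_or_eq.1 (Nat.lt_succ_of_le hk2) with h | h
      · rw [hup k (by omega)]
        exact hA5 k hk1 (by omega)
      · rw [h, hupT]
        intro hc
        refine hnotim (orbitSet wfin) ?_ hc
        intro q hq
        rw [hNdef]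
        exact Set.mem_union_right _ (Set.image_mono Set.subset_union_right hq)

end Config

/-- Let `f ∈ Homeo₀(T²)` have an `ε`-upper-stable rotation set with
`0 < ε < 1`, `F` a lift of `f`, and `(x̃_i)` an `(ε/2)`-pseudo-orbit of `F`. If
`i < j` and `w ∈ ℤ²` with `‖x̃_j − x̃_i − w‖ < ε/2`, then `w/(j−i) ∈ ρ(F)`; in
particular `x̃_j − x̃_i = (j−i)v + η` with `v ∈ ρ(F)` and `‖η‖ < ε/2`. -/
theorem pseudo_orbit_return_vector_in_rotSet (f : T2 ≃ₜ T2) (hf : f ∈ Homeo0)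
    (ε : ℝ) (hε0 : 0 < ε) (hε1 : ε < 1)
    (F : R2 ≃ₜ R2) (hF : IsLift f F) (hstab : UpperStable Homeo0 F ε)
    (x : ℕ → R2) (hx : IsPseudoOrbit (⇑F) (ε / 2) x)
    (i j : ℕ) (hij : i < j) (w : R2) (hw : w ∈ intLattice)
    (hclose : ‖x j - x i - w‖ < ε / 2) :
    ((j : ℝ) - (i : ℝ))⁻¹ • w ∈ rotSet F ∧
    ∃ v ∈ rotSet F, ∃ η : R2, ‖η‖ < ε / 2 ∧
      x j - x i = ((j : ℝ) - (i : ℝ)) • v + η := by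
  set n : ℕ := j - i with hn_def
  have hn : 1 ≤ n := by omega
  set y : ℕ → R2 := fun k => x (i + k) with hy
  have hyn : y n = x j := by
    have hj : i + n = j := by rw [hn_def]; exact Nat.add_sub_cancel' hij.le
    rw [hy]
    simp only
    rw [hj]
  have hy0 : y 0 = x i := by rw [hy]; simp
  have hxy : ∀ t : ℕ, dist (F (y t)) (y (t+1)) < ε/2 := by
    intro t
    have h := hx (i + t)
    rw [hy]
    simp only
    rw [show i + (t+1) = (i+t)+1 from rfl]
    exact h
  set c1 : ℝ := dist (F (y (n-1))) (y n) with hc1def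
  have hc1 : c1 < ε/2 := by
    have := hxy (n-1)
    rwa [show n-1+1 = n by omega] at this
  set c2 : ℝ := ‖x j - x i - w‖ with hc2def
  have hc2 : c2 < ε/2 := hclose
  have hc1p : 0 ≤ c1 := dist_nonneg
  have hc2p : 0 ≤ c2 := norm_nonneg _
  set E : ℝ := max (ε/2) (c1 + c2) with hE
  have hEp : 0 < E := lt_of_lt_of_le (by linarith) (le_max_left _ _)
  have hEε : E < ε := max_lt (by linarith) (by linarith)
  have hEhalf : ε/2 ≤ E := le_max_left _ _
  have hEc : c1 + c2 ≤ E := le_max_right _ _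
  set μ : ℝ := ε - E with hμdef
  have hμ : 0 < μ := by rw [hμdef]; linarith
  set δ : ℝ := μ/8 with hδdef
  set γ : ℝ := μ/4 with hγdef
  have hδ : 0 < δ := by rw [hδdef]; linarith
  have hγ : 0 < γ := by rw [hγdef]; linarith
  obtain ⟨A, hA0, hA1, hA2, hA3, hA4, hA5⟩ := choose_config F n hn y (y 0 + w) δ hδ
  set b : ℕ → R2 := fun t => if t + 1 = n then y 0 + w else F.symm (A (t+1)) with hbdef
  have ha_d : ∀ k < n, ∀ l < n, k ≠ l → A k - A l ∉ intLattice := by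
    intro k hk l hl hkl
    rcases lt_or_gt_of_ne hkl with h | h
    · exact lat_sub_not_mem_symm (hA3 l (by omega) k h)
    · exact hA3 k (by omega) l h
  have hb_d : ∀ k < n, ∀ l < n, k ≠ l → b k - b l ∉ intLattice := by
    intro k hk l hl hkl
    rw [hbdef]
    simp only
    by_cases hkn : k + 1 = n <;> by_cases hln : l + 1 = n
    · omega
    · rw [if_pos hkn, if_neg hln]
      exact lat_sub_not_mem_symm (hA5 (l+1) (by omega) (by omega))
    · rw [if_neg hkn, if_pos hln]
      exact hA5 (k+1) (by omega) (by omega)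
    · rw [if_neg hkn, if_neg hln]
      rcases lt_or_gt_of_ne hkl with h | h
      · exact lat_sub_not_mem_symm (hA4 (l+1) (by omega) (by omega) (k+1) (by omega) (by omega))
      · exact hA4 (k+1) (by omega) (by omega) (l+1) (by omega) (by omega)
  have hFyA : ∀ t < n, dist (F (y t)) (A t) ≤ δ := by
    intro t ht
    rcases Nat.eq_zero_or_pos t with h0 | h1
    · rw [h0, hA0, dist_self]
      exact hδ.le
    · rw [dist_comm]
      exact (hA2 t h1 (by omega)).le
  have hab : ∀ k < n, ‖b k - A k‖ ≤ E + 2*δ := by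
    intro t ht
    rw [hbdef]
    simp only
    by_cases htn : t + 1 = n
    · rw [if_pos htn]
      have htn' : t = n - 1 := by omega
      have hfirst : ‖(y 0 + w) - y n‖ = c2 := by
        rw [hc2def, ← hyn, ← hy0, ← norm_neg]
        congr 1
        abel
      have hsecond : ‖y n - F (y t)‖ = c1 := by
        rw [hc1def, htn', dist_comm, dist_eq_norm]
      calc ‖(y 0 + w) - A t‖
          = ‖((y 0 + w) - y n) + (y n - F (y t)) + (F (y t) - A t)‖ := by congr 1; abel
        _ ≤ ‖((y 0 + w) - y n) + (y n - F (y t))‖ + ‖F (y t) - A t‖ := norm_add_le _ _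
        _ ≤ ‖(y 0 + w) - y n‖ + ‖y n - F (y t)‖ + ‖F (y t) - A t‖ := by
            have := norm_add_le ((y 0 + w) - y n) (y n - F (y t))
            linarith
        _ ≤ c2 + c1 + δ := by
            rw [hfirst, hsecond]
            have := hFyA t ht
            rw [dist_eq_norm] at this
            linarith
        _ ≤ E + 2*δ := by linarith
    · rw [if_neg htn]
      have hbt : F.symm (A (t+1)) ∈ ball (y (t+1)) δ := hA1 (t+1) (by omega) (by omega)
      have h1 : ‖F.symm (A (t+1)) - y (t+1)‖ ≤ δ := by
        rw [← dist_eq_norm]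
        exact (mem_ball.1 hbt).le
      have h2 : ‖y (t+1) - F (y t)‖ ≤ ε/2 := by
        rw [← dist_eq_norm, dist_comm]
        exact (hxy t).le
      have h3 : ‖F (y t) - A t‖ ≤ δ := by
        rw [← dist_eq_norm]
        exact hFyA t ht
      calc ‖F.symm (A (t+1)) - A t‖
          = ‖(F.symm (A (t+1)) - y (t+1)) + (y (t+1) - F (y t)) + (F (y t) - A t)‖ := by
            congr 1; abel
        _ ≤ ‖(F.symm (A (t+1)) - y (t+1)) + (y (t+1) - F (y t))‖ + ‖F (y t) - A t‖ :=
            norm_add_le _ _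
        _ ≤ ‖F.symm (A (t+1)) - y (t+1)‖ + ‖y (t+1) - F (y t)‖ + ‖F (y t) - A t‖ := by
            have := norm_add_le (F.symm (A (t+1)) - y (t+1)) (y (t+1) - F (y t))
            linarith
        _ ≤ δ + ε/2 + δ := by linarith
        _ ≤ E + 2*δ := by linarith
  obtain ⟨h, hhe, hhv, hhd⟩ := move_homeo n A b ha_d hb_d (E + 2*δ) γ
    (by linarith) hγ hab
  set G : R2 ≃ₜ R2 := F.trans h with hGdef
  have hGapp : ∀ z : R2, G z = h (F z) := fun z => rfl
  have hGe : Equivariant ⇑G := by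
    intro z v hv
    rw [hGapp, hGapp, hF.equivariant z v hv, hhe (F z) v hv]
  obtain ⟨g, hg⟩ := descend G hGe
  have hsup : supDist ⇑F ⇑G < ε := by
    have hle : supDist ⇑F ⇑G ≤ E + 2*δ + γ := by
      unfold supDist
      apply ciSup_le
      intro z
      rw [hGapp, dist_comm]
      exact hhd (F z)
    have : E + 2*δ + γ < ε := by
      rw [hδdef, hγdef]
      rw [hμdef] at *
      linarith
    linarith
  have hsubset : rotSet G ⊆ rotSet F := hstab g ⟨G, hg⟩ G hg hsup
  have hnne : ((n:ℕ):ℝ) ≠ 0 := Nat.cast_ne_zero.2 (by omega)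
  -- the periodic orbit of G
  have horb : ∀ k, k ≤ n-1 → (⇑G)^[k] (y 0) = F.symm (A k) := by
    intro k
    induction k with
    | zero =>
      intro _
      rw [Function.iterate_zero_apply, hA0, Homeomorph.symm_apply_apply]
    | succ k ih =>
      intro hk
      rw [Function.iterate_succ_apply', ih (by omega), hGapp, Homeomorph.apply_symm_apply,
        hhv k (by omega), hbdef]
      simp only
      rw [if_neg (by omega)]
  have horbn : (⇑G)^[n] (y 0) = y 0 + w := by
    have hn1 : n = (n-1) + 1 := by omega
    rw [hn1, Function.iterate_succ_apply', horb (n-1) le_rfl, hGapp,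
      Homeomorph.apply_symm_apply, hhv (n-1) (by omega), hbdef]
    simp only
    rw [if_pos (by omega)]
  have hper := iter_periodic G hGe n (y 0) w hw horbn
  set v₀ : R2 := ((n:ℕ):ℝ)⁻¹ • w with hv₀
  have hval : ∀ k : ℕ, ((((k+1)*n : ℕ):ℝ))⁻¹ • ((⇑G)^[(k+1)*n] (y 0) - y 0) = v₀ := by
    intro k
    rw [hper (k+1), add_sub_cancel_left, ← Nat.cast_smul_eq_nsmul ℝ, smul_smul, hv₀]
    congr 1
    have hcast : (((k+1)*n : ℕ):ℝ) = ((k:ℝ)+1) * (n:ℝ) := by push_cast; ring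
    rw [hcast]
    have hk1 : ((k:ℝ)+1) ≠ 0 := by positivity
    field_simp
    exact Nat.cast_succ k
  have hmem : v₀ ∈ rotSet G := by
    refine ⟨fun _ => y 0, fun k => (k+1)*n, ?_, ?_⟩
    · apply tendsto_atTop_mono (fun k => ?_) tendsto_id
      calc (k:ℕ) ≤ k+1 := Nat.le_succ k
        _ ≤ (k+1)*n := Nat.le_mul_of_pos_right _ (by omega)
    · have heq : (fun k : ℕ => (((k+1)*n:ℕ):ℝ)⁻¹ • ((⇑G)^[(k+1)*n] (y 0) - y 0)) =
          fun _ => v₀ := funext hval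
      rw [heq]
      exact tendsto_const_nhds
  have hmemF : v₀ ∈ rotSet F := hsubset hmem
  have hji : (j:ℝ) - (i:ℝ) = ((n:ℕ):ℝ) := by
    rw [hn_def]
    rw [Nat.cast_sub hij.le]
  constructor
  · rw [hji]
    exact hmemF
  · refine ⟨v₀, hmemF, x j - x i - w, hclose, ?_⟩
    rw [hji, hv₀, smul_inv_smul₀ hnne]
    abel
end
end
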